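/- Let T be a non-trivial subgroup of the symmetric group on Q = {1,…,q} and C(T) = {α(g) : g ∈ T} the associated permutation code in H(q,q). Then C(T) is equivalent to the repetition code Rep(q,q) (i.e., some automorphism of the Hamming graph maps C(T) onto Rep(q,q)) if and only if T acts regularly on Q. -/

import Mathlib

/-- The automorphism of the Hamming graph `H(m,q)` determined by `h ∈ Sym(Q)^m` and
`σ ∈ Sym(Fin m)`: `(α^{hσ})_k = (α_{kσ⁻¹})^{h_{kσ⁻¹}}`. -/
def hammAut {m : ℕ} {Q : Type*} (h : Fin m → Equiv.Perm Q) (σ : Equiv.Perm (Fin m)) :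
    Equiv.Perm (Fin m → Q) :=
  (Equiv.piCongrRight h).trans (Equiv.arrowCongr σ (Equiv.refl Q))

lemma hammAut_apply {m : ℕ} {Q : Type*} (h : Fin m → Equiv.Perm Q) (σ : Equiv.Perm (Fin m))
    (α : Fin m → Q) (k : Fin m) :
    hammAut h σ α k = h (σ.symm k) (α (σ.symm k)) := rfl

/-- For a non-trivial subgroup `T ≤ Sym(Fin q)`, the permutation code `C(T)` is equivalent
(under an automorphism of `H(q,q)`) to the repetition code iff `T` acts regularly. -/
theorem stmt_2 {q : ℕ} (T : Subgroup (Equiv.Perm (Fin q))) (hT : T ≠ ⊥) :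
    (∃ (h : Fin q → Equiv.Perm (Fin q)) (σ : Equiv.Perm (Fin q)),
        (⇑(hammAut h σ)) '' {α : Fin q → Fin q | ∃ g ∈ T, α = ⇑g} =
          {α : Fin q → Fin q | ∃ c, α = fun _ => c}) ↔
      ((∀ x y : Fin q, ∃ g ∈ T, g x = y) ∧
        (∀ x : Fin q, ∀ g ∈ T, g x = x → g = 1)) := by
  constructor
  · rintro ⟨h, σ, hE⟩
    have himg : ∀ g : Equiv.Perm (Fin q), g ∈ T →
        ∃ c, ∀ k, h (σ.symm k) (g (σ.symm k)) = c := by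
      intro g hg
      have : hammAut h σ ⇑g ∈ {α : Fin q → Fin q | ∃ c, α = fun _ => c} := by
        rw [← hE]; exact ⟨⇑g, ⟨g, hg, rfl⟩, rfl⟩
      obtain ⟨c, hc⟩ := this
      exact ⟨c, fun k => by
        have := congrFun hc k
        rwa [hammAut_apply] at this⟩
    obtain ⟨c₀, hc₀⟩ := himg 1 T.one_mem
    simp only [Equiv.Perm.one_apply] at hc₀
    constructor
    · intro x y
      have hmem : (fun _ : Fin q => h x y) ∈
          (⇑(hammAut h σ)) '' {α : Fin q → Fin q | ∃ g ∈ T, α = ⇑g} := by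
        rw [hE]; exact ⟨h x y, rfl⟩
      obtain ⟨α, ⟨g, hg, rfl⟩, hα⟩ := hmem
      refine ⟨g, hg, ?_⟩
      have hx := congrFun hα (σ x)
      rw [hammAut_apply, Equiv.symm_apply_apply] at hx
      exact (h x).injective hx
    · intro x g hg hgx
      obtain ⟨c, hc⟩ := himg g hg
      have hcx := hc (σ x)
      rw [Equiv.symm_apply_apply, hgx] at hcx
      have hcx' := hc₀ (σ x)
      rw [Equiv.symm_apply_apply] at hcx'
      have hcc : c = c₀ := hcx ▸ hcx'
      apply Equiv.ext
      intro i
      have h1 := hc (σ i)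
      have h2 := hc₀ (σ i)
      rw [Equiv.symm_apply_apply] at h1 h2
      have : h i (g i) = h i i := by rw [h1, h2, hcc]
      simpa using (h i).injective this
  · rintro ⟨htrans, hfree⟩
    -- get a point of Fin q
    obtain ⟨g₀, hg₀T, hg₀⟩ : ∃ g₀ ∈ T, g₀ ≠ (1 : Equiv.Perm (Fin q)) := by
      by_contra hcon
      push_neg at hcon
      apply hT
      ext g
      simp only [Subgroup.mem_bot]
      exact ⟨fun hg => hcon g hg, fun hg => hg ▸ T.one_mem⟩
    obtain ⟨x₀, -⟩ : ∃ x : Fin q, g₀ x ≠ x := by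
      by_contra hcon
      push_neg at hcon
      exact hg₀ (Equiv.ext fun x => by simpa using hcon x)
    have key : ∀ i : Fin q, Function.Bijective (fun t : T => (t : Equiv.Perm (Fin q)) i) := by
      intro i
      constructor
      · intro t t' htt'
        have hmem : ((t'⁻¹ * t : T) : Equiv.Perm (Fin q)) ∈ T := (t'⁻¹ * t : T).2
        have hfix : ((t'⁻¹ * t : T) : Equiv.Perm (Fin q)) i = i := by
          simp only [Subgroup.coe_mul, Subgroup.coe_inv, Equiv.Perm.mul_apply]
          simp only at htt'
          rw [htt', Equiv.Perm.inv_def, Equiv.symm_apply_apply]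
        have h1 := hfree i _ hmem hfix
        have : (t' : Equiv.Perm (Fin q))⁻¹ * (t : Equiv.Perm (Fin q)) = 1 := by
          simpa using h1
        have := mul_eq_one_iff_inv_eq.mp this
        exact Subtype.ext (by simp_all)
      · intro y
        obtain ⟨g, hg, hgy⟩ := htrans i y
        exact ⟨⟨g, hg⟩, hgy⟩
    let e : Fin q → (T ≃ Fin q) := fun i => Equiv.ofBijective _ (key i)
    refine ⟨fun i => (e i).symm.trans (e x₀), 1, ?_⟩
    ext α
    constructor
    · rintro ⟨β, ⟨g, hg, rfl⟩, rfl⟩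
      refine ⟨g x₀, ?_⟩
      funext k
      rw [hammAut_apply]
      simp only [Equiv.trans_apply, Equiv.Perm.one_apply]
      have h1 : (e ((1 : Equiv.Perm (Fin q)).symm k)).symm
          (g ((1 : Equiv.Perm (Fin q)).symm k)) = ⟨g, hg⟩ := by
        rw [Equiv.symm_apply_eq]; rfl
      rw [h1]
      rfl
    · rintro ⟨c, rfl⟩
      refine ⟨⇑(((e x₀).symm c : T) : Equiv.Perm (Fin q)),
        ⟨((e x₀).symm c : T), ((e x₀).symm c : T).2, rfl⟩, ?_⟩
      funext k
      rw [hammAut_apply]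
      simp only [Equiv.trans_apply, Equiv.Perm.one_apply]
      have h1 : (e ((1 : Equiv.Perm (Fin q)).symm k)).symm
          ((((e x₀).symm c : T) : Equiv.Perm (Fin q)) ((1 : Equiv.Perm (Fin q)).symm k))
          = (e x₀).symm c := by
        rw [Equiv.symm_apply_eq]; rfl
      rw [h1]
      simp
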